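/- For α > 1, the set of irrational θ ∈ [0,1] with limsup_{n→∞} aₙ qₙ₋₁^{1-α} > 0 is contained in the countable union over m ∈ ℕ of the Jarník sets J_{α+1}^{m} = { x ∈ [0,1] : |x − p/q| ≤ m q^{-(α+1)} for infinitely many p, q ∈ ℕ }. Consequently, dim_H(Θ̲_α) ≤ 2/(α+1). -/

import Mathlib

open Filter Topology MeasureTheory

namespace CFPaper

/-- Continued fraction denominators: `q 0 = 1`, `q 1 = a 1`, `q (n+2) = a (n+2) * q (n+1) + q n`. -/
def cfQ (a : ℕ → ℕ) : ℕ → ℕ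
  | 0 => 1
  | 1 => a 1
  | (n+2) => a (n+2) * cfQ a (n+1) + cfQ a n

/-- Continued fraction numerators. -/
def cfP (a : ℕ → ℕ) : ℕ → ℕ
  | 0 => 0
  | 1 => 1
  | (n+2) => a (n+2) * cfP a (n+1) + cfP a n

/-- `q_{n-1}` with the convention `q_{-1} = 0`. -/
def qext (a : ℕ → ℕ) : ℕ → ℕ
  | 0 => 0
  | (n+1) => cfQ a n

/-- `p_{n-1}` with the convention `p_{-1} = 1`. -/
def pext (a : ℕ → ℕ) : ℕ → ℕ
  | 0 => 1
  | (n+1) => cfP a n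

/-- `a` (with `a 1, a 2, …` relevant) is the continued fraction expansion of the
irrational `θ`: all entries are positive and the convergents tend to `θ`. -/
def IsCF (θ : ℝ) (a : ℕ → ℕ) : Prop :=
  Irrational θ ∧ (∀ n, 1 ≤ n → 1 ≤ a n) ∧
    Tendsto (fun n => (cfP a n : ℝ) / (cfQ a n : ℝ)) atTop (nhds θ)

/-- `A_α(θ) = limsup_n a_n q_{n-1}^{1-α}` (valued in `ℝ≥0∞`). -/
noncomputable def Acf (a : ℕ → ℕ) (α : ℝ) : ENNReal :=
  Filter.limsup (fun n => (a (n+1) : ENNReal) * (cfQ a n : ENNReal) ^ (1 - α)) atTop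

/-- The left shift on infinite binary sequences. -/
def shiftMap (x : ℕ → Bool) : ℕ → Bool := fun n => x (n+1)

/-- A subshift: a closed shift-invariant subset of `{0,1}^ℕ`. -/
def IsSubshift (Y : Set (ℕ → Bool)) : Prop := IsClosed Y ∧ shiftMap '' Y = Y

/-- The language of `Y`: all finite factors of elements of `Y`. -/
def Lang (Y : Set (ℕ → Bool)) : Set (List Bool) :=
  {w | ∃ x ∈ Y, ∃ k, w = (List.range w.length).map fun i => x (k + i)}

/-- The rotation sequence of slope `θ`: `x n = ⌈θ(n+1)⌉ - ⌈θ n⌉` (as a boolean, `true` = 1). -/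
noncomputable def rotWord (θ : ℝ) : ℕ → Bool :=
  fun n => if ⌈θ * ((n : ℝ)+1)⌉ - ⌈θ * (n : ℝ)⌉ = 1 then true else false

/-- The Sturmian subshift of slope `θ`: orbit closure of the rotation sequence. -/
noncomputable def sturmian (θ : ℝ) : Set (ℕ → Bool) :=
  closure {x | ∃ k, x = shiftMap^[k] (rotWord θ)}

/-- `w` is a nonempty proper prefix and suffix of `W`, both in the language of `Y`. -/
def PSPair (Y : Set (ℕ → Bool)) (w W : List Bool) : Prop :=
  w ∈ Lang Y ∧ W ∈ Lang Y ∧ w <+: W ∧ w <:+ W ∧ W ≠ w ∧ w ≠ []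

/-- `A_{α,n}`: infimum of `(|W|-|w|)/|w|^{1/α}` over admissible pairs with `|W| = n`. -/
noncomputable def repA (Y : Set (ℕ → Bool)) (α : ℝ) (n : ℕ) : ENNReal :=
  sInf {r | ∃ w W, PSPair Y w W ∧ W.length = n ∧
    r = ((W.length - w.length : ℕ) : ENNReal) / ((w.length : ENNReal) ^ (1/α))}

/-- `ℓ_α = liminf_n A_{α,n}`. -/
noncomputable def ellCf (Y : Set (ℕ → Bool)) (α : ℝ) : ENNReal :=
  Filter.liminf (repA Y α) atTop

/-- `ℓ`: infimum of `(|W|-|w|)/|w|` over all admissible pairs; `Y` is repulsive if `ℓ > 0`. -/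
noncomputable def ellRep (Y : Set (ℕ → Bool)) : ENNReal :=
  sInf {r | ∃ w W, PSPair Y w W ∧
    r = ((W.length - w.length : ℕ) : ENNReal) / (w.length : ENNReal)}

/-- The repetitive function: `repFun Y r` is the least `r'` such that every word of
length `r'` in the language contains every word of length `r` as a factor. -/
noncomputable def repFun (Y : Set (ℕ → Bool)) (r : ℕ) : ℕ :=
  sInf {r' | ∀ W ∈ Lang Y, W.length = r' → ∀ w ∈ Lang Y, w.length = r → w <:+: W}

/-- `R_α = limsup_n R(n)/n^α`. -/
noncomputable def Ralpha (Y : Set (ℕ → Bool)) (α : ℝ) : ENNReal :=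
  Filter.limsup (fun n => (repFun Y n : ENNReal) / (n : ENNReal) ^ α) atTop

/-- `Q(n)`: the supremum of powers `p` such that some word of length `n` has `W^p` in the language. -/
noncomputable def Qfun (Y : Set (ℕ → Bool)) (n : ℕ) : ENNReal :=
  sSup {x | ∃ p : ℕ, x = (p : ENNReal) ∧ ∃ W ∈ Lang Y,
    W.length = n ∧ (List.replicate p W).flatten ∈ Lang Y}

/-- `Q_α = limsup_n Q(n)/n^{α-1}`. -/
noncomputable def Qalpha (Y : Set (ℕ → Bool)) (α : ℝ) : ENNReal :=
  Filter.limsup (fun n => Qfun Y n / (n : ENNReal) ^ (α - 1)) atTop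

/-- The Jarník set `J_β^c`. -/
def Jarnik (β c : ℝ) : Set ℝ :=
  {x | x ∈ Set.Icc (0:ℝ) 1 ∧
    {pq : ℕ × ℕ | 0 < pq.2 ∧ |x - (pq.1 : ℝ)/(pq.2 : ℝ)| ≤ c * (pq.2 : ℝ) ^ (-β)}.Infinite}

/-- The exact Jarník set `Exact(β)`. -/
def ExactSet (β : ℝ) : Set ℝ :=
  Jarnik β 1 \ ⋃ n ∈ {n : ℕ | 2 ≤ n}, Jarnik β ((n : ℝ)/((n : ℝ)+1))

/-- The substitution `τ` : `0 ↦ 0`, `1 ↦ 10`. -/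
def tauW (w : List Bool) : List Bool := w.flatMap fun b => if b then [true, false] else [false]

/-- The substitution `ρ` : `0 ↦ 01`, `1 ↦ 1`. -/
def rhoW (w : List Bool) : List Bool := w.flatMap fun b => if b then [true] else [false, true]

/-- The composition `τ^{a₁} ∘ ρ^{a₂} ∘ ⋯ ∘ τ^{a_{2k-1}} ∘ ρ^{a_{2k}}`. -/
def stageW (a : ℕ → ℕ) : ℕ → List Bool → List Bool
  | 0 => id
  | (k+1) => stageW a k ∘ tauW^[a (2*k+1)] ∘ rhoW^[a (2*k+2)]

/-- The word `R_k`. -/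
def Rw (a : ℕ → ℕ) (k : ℕ) : List Bool := stageW a k [false]

/-- The word `L_k`. -/
def Lw (a : ℕ → ℕ) (k : ℕ) : List Bool := stageW a k [true]

/-- Best rational approximation of the first kind. -/
def IsBestApprox (θ : ℝ) (p q : ℕ) : Prop :=
  0 < q ∧ Nat.Coprime p q ∧
    ∀ p' q' : ℕ, 0 < q' → q' < q → |θ - (p : ℝ)/(q : ℝ)| < |θ - (p' : ℝ)/(q' : ℝ)|

/-- The double sum `Σ_{k ≥ m} Σ_{j=1}^{a_{k+1}} (j q_k + q_{k-1})^{-t}` (valued in `ℝ≥0∞`). -/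
noncomputable def dblSum (a : ℕ → ℕ) (t : ℝ) (m : ℕ) : ENNReal :=
  ∑' k : ℕ, if m ≤ k then
    ∑ j ∈ Finset.Icc 1 (a (k+1)), ((j * cfQ a k + qext a k : ℕ) : ENNReal) ^ (-t)
  else 0


section Aux

open scoped ENNReal NNReal

variable {a : ℕ → ℕ}

lemma cfQ_one_le (ha : ∀ n, 1 ≤ n → 1 ≤ a n) : ∀ n, 1 ≤ cfQ a n
  | 0 => le_rfl
  | 1 => ha 1 le_rfl
  | (n+2) => by
      have := cfQ_one_le ha n
      simp only [cfQ]; omega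

lemma cfQ_mono_succ (ha : ∀ n, 1 ≤ n → 1 ≤ a n) (n : ℕ) : cfQ a n ≤ cfQ a (n+1) := by
  cases n with
  | zero => simpa [cfQ] using ha 1 le_rfl
  | succ n =>
      have h1 := cfQ_one_le ha (n+1)
      have h2 := ha (n+2) (by omega)
      show cfQ a (n+1) ≤ cfQ a (n+2)
      simp only [cfQ]
      nlinarith

lemma cfQ_succ_ge (ha : ∀ n, 1 ≤ n → 1 ≤ a n) (n : ℕ) :
    a (n+1) * cfQ a n ≤ cfQ a (n+1) := by
  cases n with
  | zero => simp [cfQ]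
  | succ n =>
      show a (n+2) * cfQ a (n+1) ≤ a (n+2) * cfQ a (n+1) + cfQ a n
      omega

lemma cfQ_two_mul_le (ha : ∀ n, 1 ≤ n → 1 ≤ a n) (n : ℕ) :
    2 * cfQ a n ≤ cfQ a (n+2) := by
  have h1 := cfQ_mono_succ ha n
  have h2 := ha (n+2) (by omega)
  have h3 := cfQ_one_le ha (n+1)
  simp only [cfQ]
  nlinarith

lemma cfQ_lt (ha : ∀ n, 1 ≤ n → 1 ≤ a n) (n : ℕ) : cfQ a (n+1) < cfQ a (n+2) := by
  have h2 := ha (n+2) (by omega)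
  have h3 := cfQ_one_le ha (n+1)
  have h4 := cfQ_one_le ha n
  simp only [cfQ]
  nlinarith

lemma cf_det (n : ℕ) :
    (cfP a (n+1) : ℤ) * cfQ a n - cfP a n * cfQ a (n+1) = (-1)^n := by
  induction n with
  | zero => simp [cfP, cfQ]
  | succ n ih =>
      have hp : cfP a (n+2) = a (n+2) * cfP a (n+1) + cfP a n := rfl
      have hq : cfQ a (n+2) = a (n+2) * cfQ a (n+1) + cfQ a n := rfl
      rw [hp, hq]
      push_cast
      ring_nf
      ring_nf at ih
      push_cast at ih ⊢
      linarith [ih]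


lemma cfQ_pos_real (ha : ∀ n, 1 ≤ n → 1 ≤ a n) (n : ℕ) : (0:ℝ) < cfQ a n := by
  exact_mod_cast Nat.lt_of_lt_of_le Nat.zero_lt_one (cfQ_one_le ha n)

lemma conv_diff (ha : ∀ n, 1 ≤ n → 1 ≤ a n) (n : ℕ) :
    |(cfP a (n+1) : ℝ)/(cfQ a (n+1)) - (cfP a n : ℝ)/(cfQ a n)|
      = 1/((cfQ a n : ℝ) * cfQ a (n+1)) := by
  have h0 := cfQ_pos_real ha n
  have h1 := cfQ_pos_real ha (n+1)
  rw [div_sub_div _ _ h1.ne' h0.ne', abs_div, abs_of_pos (mul_pos h1 h0)]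
  have := cf_det (a := a) n
  have h2 : (cfP a (n+1) : ℝ) * cfQ a n - cfP a n * cfQ a (n+1) = (-1:ℝ)^n := by
    exact_mod_cast congrArg (fun z : ℤ => (z : ℝ)) this
  have h3 : (cfP a (n+1) : ℝ) * cfQ a n - cfQ a (n+1) * cfP a n = (-1:ℝ)^n := by
    rw [← h2]; ring
  rw [h3, abs_pow, abs_neg, abs_one, one_pow, mul_comm]

lemma qq_ge (ha : ∀ n, 1 ≤ n → 1 ≤ a n) (n : ℕ) :
    ∀ j, 2^j * (cfQ a n * cfQ a (n+1)) ≤ cfQ a (n+j) * cfQ a (n+j+1) := by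
  intro j
  induction j with
  | zero => simp
  | succ j ih =>
      have h1 : 2 * cfQ a (n+j) ≤ cfQ a (n+j+2) := cfQ_two_mul_le ha (n+j)
      have h2 : cfQ a (n+j) * cfQ a (n+j+1) * 2 ≤ cfQ a (n+j+1) * cfQ a (n+j+2) := by
        calc cfQ a (n+j) * cfQ a (n+j+1) * 2 = (2 * cfQ a (n+j)) * cfQ a (n+j+1) := by ring
        _ ≤ cfQ a (n+j+2) * cfQ a (n+j+1) := Nat.mul_le_mul_right _ h1
        _ = cfQ a (n+j+1) * cfQ a (n+j+2) := by ring
      calc 2^(j+1) * (cfQ a n * cfQ a (n+1)) = (2^j * (cfQ a n * cfQ a (n+1))) * 2 := by ring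
      _ ≤ cfQ a (n+j) * cfQ a (n+j+1) * 2 := Nat.mul_le_mul_right _ ih
      _ ≤ cfQ a (n+j+1) * cfQ a (n+j+2) := h2
      _ = cfQ a (n+(j+1)) * cfQ a (n+(j+1)+1) := by ring_nf

lemma conv_est (ha : ∀ n, 1 ≤ n → 1 ≤ a n) (n : ℕ) :
    ∀ j, |(cfP a (n+j) : ℝ)/(cfQ a (n+j)) - (cfP a n : ℝ)/(cfQ a n)|
      ≤ (∑ i ∈ Finset.range j, ((1:ℝ)/2)^i) / ((cfQ a n : ℝ) * cfQ a (n+1)) := by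
  intro j
  induction j with
  | zero => simp
  | succ j ih =>
      have hqq : (0:ℝ) < (cfQ a n : ℝ) * cfQ a (n+1) := by
        have := cfQ_pos_real ha n; have := cfQ_pos_real ha (n+1); positivity
      have key : |(cfP a (n+j+1) : ℝ)/(cfQ a (n+j+1)) - (cfP a (n+j) : ℝ)/(cfQ a (n+j))|
          ≤ ((1:ℝ)/2)^j / ((cfQ a n : ℝ) * cfQ a (n+1)) := by
        rw [conv_diff ha (n+j)]
        rw [div_le_div_iff₀ (by have := cfQ_pos_real ha (n+j); have := cfQ_pos_real ha (n+j+1); positivity) hqq]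
        have h2 : (2:ℝ)^j * ((cfQ a n : ℝ) * cfQ a (n+1)) ≤ (cfQ a (n+j) : ℝ) * cfQ a (n+j+1) := by
          exact_mod_cast Nat.cast_le.mpr (qq_ge ha n j)
        have h3 : ((1:ℝ)/2)^j * (2:ℝ)^j = 1 := by
          rw [← mul_pow]; norm_num
        nlinarith [pow_pos (by norm_num : (0:ℝ) < 1/2) j, pow_pos (by norm_num : (0:ℝ) < 2) j]
      calc |(cfP a (n+(j+1)) : ℝ)/(cfQ a (n+(j+1))) - (cfP a n : ℝ)/(cfQ a n)|
          = |((cfP a (n+j+1) : ℝ)/(cfQ a (n+j+1)) - (cfP a (n+j) : ℝ)/(cfQ a (n+j)))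
            + ((cfP a (n+j) : ℝ)/(cfQ a (n+j)) - (cfP a n : ℝ)/(cfQ a n))| := by
            rw [show n + (j+1) = n+j+1 from rfl]; ring_nf
      _ ≤ |(cfP a (n+j+1) : ℝ)/(cfQ a (n+j+1)) - (cfP a (n+j) : ℝ)/(cfQ a (n+j))|
            + |(cfP a (n+j) : ℝ)/(cfQ a (n+j)) - (cfP a n : ℝ)/(cfQ a n)| := abs_add_le _ _
      _ ≤ ((1:ℝ)/2)^j / ((cfQ a n : ℝ) * cfQ a (n+1))
            + (∑ i ∈ Finset.range j, ((1:ℝ)/2)^i) / ((cfQ a n : ℝ) * cfQ a (n+1)) := by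
            exact add_le_add key ih
      _ = (∑ i ∈ Finset.range (j+1), ((1:ℝ)/2)^i) / ((cfQ a n : ℝ) * cfQ a (n+1)) := by
            rw [Finset.sum_range_succ]; ring

lemma theta_est {θ : ℝ} (ha : ∀ n, 1 ≤ n → 1 ≤ a n)
    (hθ : Tendsto (fun n => (cfP a n : ℝ) / (cfQ a n : ℝ)) atTop (nhds θ)) (n : ℕ) :
    |θ - (cfP a n : ℝ)/(cfQ a n)| ≤ 2 / ((cfQ a n : ℝ) * cfQ a (n+1)) := by
  have hqq : (0:ℝ) < (cfQ a n : ℝ) * cfQ a (n+1) := by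
    have := cfQ_pos_real ha n; have := cfQ_pos_real ha (n+1); positivity
  have hlim : Tendsto (fun j => |(cfP a (n+j) : ℝ)/(cfQ a (n+j)) - (cfP a n : ℝ)/(cfQ a n)|)
      atTop (nhds |θ - (cfP a n : ℝ)/(cfQ a n)|) := by
    have h1 : Tendsto (fun j : ℕ => n + j) atTop atTop := by
      simpa [Nat.add_comm] using tendsto_add_atTop_nat n
    exact ((hθ.comp h1).sub tendsto_const_nhds).abs
  refine le_of_tendsto hlim (Eventually.of_forall fun j => ?_)
  refine (conv_est ha n j).trans ?_
  exact (div_le_div_iff_of_pos_right hqq).mpr (sum_geometric_two_le j)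


lemma jarnik_p_bound {β c x : ℝ} {M p q : ℕ} (hβ : 0 ≤ β) (hc : 0 ≤ c) (hM : 1 + c ≤ (M:ℝ))
    (hx : x ∈ Set.Icc (0:ℝ) 1) (hq : 0 < q) (h : |x - (p:ℝ)/q| ≤ c * (q:ℝ)^(-β)) :
    p ≤ M * q := by
  have hq1 : (1:ℝ) ≤ q := by exact_mod_cast hq
  have hq0 : (0:ℝ) < q := by linarith
  have hr1 : (q:ℝ)^(-β) ≤ 1 :=
    Real.rpow_le_one_of_one_le_of_nonpos hq1 (neg_nonpos.mpr hβ)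
  have h2 : (p:ℝ)/q - x ≤ c * (q:ℝ)^(-β) := by
    have := abs_le.mp h; linarith [this.1]
  have h3 : (p:ℝ)/q ≤ 1 + c := by
    have hcr : c * (q:ℝ)^(-β) ≤ c := by nlinarith [Real.rpow_nonneg hq0.le (-β)]
    have := hx.2
    linarith
  have h4 : (p:ℝ) ≤ (M:ℝ) * q := by
    rw [div_le_iff₀ hq0] at h3
    nlinarith
  have : ((p:ℕ):ℝ) ≤ ((M*q : ℕ):ℝ) := by push_cast; linarith
  exact_mod_cast this

noncomputable def jcover (β c : ℝ) (M Q : ℕ) : ℕ × ℕ → Set ℝ := fun qp =>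
  if max Q 1 ≤ qp.1 ∧ qp.2 ≤ M * qp.1 then
    Metric.closedBall ((qp.2 : ℝ)/(qp.1 : ℝ)) (c * (qp.1:ℝ)^(-β)) else ∅

lemma jarnik_subset_cover {β c : ℝ} (hβ : 0 ≤ β) (hc : 0 ≤ c) {M : ℕ} (hM : 1 + c ≤ (M:ℝ))
    (Q : ℕ) : Jarnik β c ⊆ ⋃ i, jcover β c M Q i := by
  rintro x ⟨hx, hS⟩
  -- find a pair with large denominator
  have : ∃ pq : ℕ × ℕ, (0 < pq.2 ∧ |x - (pq.1 : ℝ)/(pq.2 : ℝ)| ≤ c * (pq.2 : ℝ) ^ (-β))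
      ∧ max Q 1 ≤ pq.2 := by
    by_contra hcon
    push_neg at hcon
    apply hS
    apply Set.Finite.subset (Set.finite_Icc (0,0) (M * (max Q 1), max Q 1))
    rintro ⟨p, q⟩ ⟨hq, hle⟩
    have hqlt : q < max Q 1 := by
      by_contra hge; exact absurd (hcon (p,q) ⟨hq, hle⟩) (by push_neg; omega)
    have hpb : p ≤ M * q := jarnik_p_bound hβ hc hM hx hq hle
    constructor <;> simp [Prod.le_def] <;> constructor
    · calc p ≤ M * q := hpb
        _ ≤ M * max Q 1 := Nat.mul_le_mul_left _ (le_of_lt hqlt)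
    · omega
  obtain ⟨⟨p, q⟩, ⟨hq, hle⟩, hQq⟩ := this
  have hpb : p ≤ M * q := jarnik_p_bound hβ hc hM hx hq hle
  refine Set.mem_iUnion.mpr ⟨(q, p), ?_⟩
  rw [jcover, if_pos ⟨hQq, hpb⟩]
  rw [Metric.mem_closedBall, Real.dist_eq]
  exact hle

lemma jarnik_hm {β c : ℝ} (hβ : 2 < β) (hc : 0 ≤ c) {s : ℝ} (hs : 2/β < s) :
    μH[s] (Jarnik β c) = 0 := by
  have hβ0 : (0:ℝ) < β := by linarith
  have hs0 : (0:ℝ) < s := lt_of_le_of_lt (by positivity) hs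
  have hβs : 2 < β * s := by
    rw [div_lt_iff₀ hβ0] at hs; linarith [hs]
  set M : ℕ := ⌈1 + c⌉₊ with hMdef
  have hM : 1 + c ≤ (M:ℝ) := Nat.le_ceil _
  -- the summable majorant
  set F : ℕ → ℝ := fun q => ((M*q+1:ℕ):ℝ) * (2*c*(q:ℝ)^(-β))^s with hFdef
  have hF0 : ∀ q, 0 ≤ F q := by
    intro q
    have : (0:ℝ) ≤ (q:ℝ)^(-β) := Real.rpow_nonneg (Nat.cast_nonneg q) _
    have h1 : (0:ℝ) ≤ 2*c*(q:ℝ)^(-β) := by positivity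
    positivity
  have hFsum : Summable F := by
    have hmaj : Summable (fun q : ℕ => ((M:ℝ)+1) * ((2*c)^s) * (q:ℝ)^(1-β*s)) := by
      simpa [mul_assoc] using
        (Real.summable_nat_rpow.mpr (by linarith : (1:ℝ)-β*s < -1)).mul_left (((M:ℝ)+1) * ((2*c)^s))
    refine Summable.of_nonneg_of_le hF0 ?_ hmaj
    · intro q
      rcases Nat.eq_zero_or_pos q with rfl | hq
      · simp only [hFdef, Nat.cast_zero]
        rw [Real.zero_rpow (show -β ≠ 0 by linarith),
          Real.zero_rpow (show (1:ℝ)-β*s ≠ 0 by nlinarith), mul_zero, mul_zero,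
          Real.zero_rpow hs0.ne', mul_zero]
        simp
      · have hq1 : (1:ℝ) ≤ (q:ℝ) := by exact_mod_cast hq
        have hq0 : (0:ℝ) < (q:ℝ) := by linarith
        have hrw : (2*c*(q:ℝ)^(-β))^s = (2*c)^s * (q:ℝ)^(-(β*s)) := by
          rw [Real.mul_rpow (by positivity) (Real.rpow_nonneg hq0.le _),
            ← Real.rpow_mul hq0.le, neg_mul]
        have hcard : ((M*q+1:ℕ):ℝ) ≤ ((M:ℝ)+1) * q := by
          push_cast; nlinarith
        have hsplit : (q:ℝ) * (q:ℝ)^(-(β*s)) = (q:ℝ)^(1-β*s) := by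
          nth_rewrite 1 [← Real.rpow_one (q:ℝ)]
          rw [← Real.rpow_add hq0]; ring_nf
        calc F q = ((M*q+1:ℕ):ℝ) * ((2*c)^s * (q:ℝ)^(-(β*s))) := by rw [hFdef]; simp [hrw]
        _ ≤ (((M:ℝ)+1) * q) * ((2*c)^s * (q:ℝ)^(-(β*s))) := by
            apply mul_le_mul_of_nonneg_right hcard
            positivity
        _ = ((M:ℝ)+1) * ((2*c)^s) * ((q:ℝ) * (q:ℝ)^(-(β*s))) := by ring
        _ = ((M:ℝ)+1) * ((2*c)^s) * (q:ℝ)^(1-β*s) := by rw [hsplit]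
  set FE : ℕ → ℝ≥0∞ := fun q => ENNReal.ofReal (F q) with hFEdef
  have htop : ∑' q, FE q ≠ ⊤ := by
    rw [hFEdef, ← ENNReal.ofReal_tsum_of_nonneg hF0 hFsum]
    exact ENNReal.ofReal_ne_top
  -- diameter control
  set r : ℕ → ℝ≥0∞ := fun Q => ENNReal.ofReal (2*(c*((max Q 1 : ℕ):ℝ)^(-β))) with hrdef
  have hmaxtend : Tendsto (fun Q : ℕ => (max Q 1 : ℕ)) atTop atTop :=
    tendsto_atTop_mono (fun Q => le_max_left Q 1) tendsto_id
  have hrtend : Tendsto r atTop (𝓝 0) := by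
    have h1 : Tendsto (fun Q : ℕ => ((max Q 1 : ℕ):ℝ)) atTop atTop :=
      tendsto_natCast_atTop_atTop.comp hmaxtend
    have h2 : Tendsto (fun x:ℝ => x^(-β)) atTop (𝓝 0) := tendsto_rpow_neg_atTop hβ0
    have h3 : Tendsto (fun Q : ℕ => 2*(c*((max Q 1 : ℕ):ℝ)^(-β))) atTop (𝓝 0) := by
      have h4 := ((h2.comp h1).const_mul c).const_mul (2:ℝ)
      simpa using h4
    have h5 := ENNReal.tendsto_ofReal h3
    simpa [hrdef] using h5
  have hdiam : ∀ (Q : ℕ) (i : ℕ × ℕ), EMetric.diam (jcover β c M Q i) ≤ r Q := by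
    rintro Q ⟨q, p⟩
    rw [jcover]
    split_ifs with h
    · obtain ⟨hQq, hpq⟩ := h
      have hq1 : (1:ℝ) ≤ (q:ℝ) := by
        exact_mod_cast le_trans (le_max_right Q 1) hQq
      have hρ : 0 ≤ c * (q:ℝ)^(-β) := by
        have := Real.rpow_nonneg (by linarith : (0:ℝ) ≤ (q:ℝ)) (-β); positivity
      rw [← Metric.emetric_closedBall hρ]
      refine le_trans EMetric.diam_closedBall ?_
      have h2r : (2:ℝ≥0∞) * ENNReal.ofReal (c * (q:ℝ)^(-β))
          = ENNReal.ofReal (2*(c*(q:ℝ)^(-β))) := by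
        rw [ENNReal.ofReal_mul (by norm_num : (0:ℝ) ≤ 2)]
        norm_num
      rw [h2r, hrdef]
      apply ENNReal.ofReal_le_ofReal
      have hmQ1 : (0:ℝ) < ((max Q 1:ℕ):ℝ) := by
        have : 1 ≤ max Q 1 := le_max_right Q 1
        exact_mod_cast Nat.lt_of_lt_of_le Nat.zero_lt_one this
      have hcast : ((max Q 1:ℕ):ℝ) ≤ (q:ℝ) := by exact_mod_cast hQq
      have hmono : (q:ℝ)^(-β) ≤ ((max Q 1:ℕ):ℝ)^(-β) :=
        Real.rpow_le_rpow_of_nonpos hmQ1 hcast (neg_nonpos.mpr hβ0.le)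
      nlinarith [hmono]
    · exact (le_of_eq EMetric.diam_empty).trans zero_le
  -- per-cutoff sum bound
  have hQle : ∀ Q : ℕ, (∑' i : ℕ×ℕ, EMetric.diam (jcover β c M Q i) ^ s)
      ≤ ∑' k : ℕ, FE (k + max Q 1) := by
    intro Q
    set C : ℕ → ℝ≥0∞ := fun q => ENNReal.ofReal ((2*c*(q:ℝ)^(-β))^s) with hCdef
    set G : ℕ → ℕ → ℝ≥0∞ := fun q p => if max Q 1 ≤ q ∧ p ≤ M * q then C q else 0 with hGdef
    have hterm : ∀ i : ℕ×ℕ, EMetric.diam (jcover β c M Q i) ^ s ≤ G i.1 i.2 := by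
      rintro ⟨q, p⟩
      rw [jcover, hGdef]
      beta_reduce
      split_ifs with h
      · have hq1 : (1:ℝ) ≤ (q:ℝ) := by
          exact_mod_cast le_trans (le_max_right Q 1) h.1
        have hρ : 0 ≤ c * (q:ℝ)^(-β) := by
          have := Real.rpow_nonneg (by linarith : (0:ℝ) ≤ (q:ℝ)) (-β); positivity
        have hd : EMetric.diam (Metric.closedBall ((p:ℝ)/(q:ℝ)) (c * (q:ℝ)^(-β)))
            ≤ ENNReal.ofReal (2*c*(q:ℝ)^(-β)) := by
          rw [← Metric.emetric_closedBall hρ]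
          refine le_trans EMetric.diam_closedBall ?_
          rw [show (2:ℝ)*c*(q:ℝ)^(-β) = 2*(c*(q:ℝ)^(-β)) by ring,
            ENNReal.ofReal_mul (by norm_num : (0:ℝ) ≤ 2)]
          norm_num
        calc EMetric.diam (Metric.closedBall ((p:ℝ)/(q:ℝ)) (c * (q:ℝ)^(-β))) ^ s
            ≤ (ENNReal.ofReal (2*c*(q:ℝ)^(-β))) ^ s := ENNReal.rpow_le_rpow hd hs0.le
        _ = C q := by
            rw [hCdef, ENNReal.ofReal_rpow_of_nonneg (by positivity) hs0.le]
      · exact le_of_eq ((congrArg (fun d : ℝ≥0∞ => d ^ s) EMetric.diam_empty).trans (ENNReal.zero_rpow_of_pos hs0))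
    refine le_trans (ENNReal.tsum_le_tsum hterm) ?_
    rw [ENNReal.tsum_prod]
    have hinner : ∀ q : ℕ, (∑' p : ℕ, G q p) = if max Q 1 ≤ q then FE q else 0 := by
      intro q
      rw [hGdef]
      by_cases hq : max Q 1 ≤ q
      · rw [if_pos hq]
        have hcg : ∀ p : ℕ, (if max Q 1 ≤ q ∧ p ≤ M * q then C q else 0)
            = if p ∈ Finset.range (M*q+1) then C q else 0 := by
          intro p
          by_cases hp : p ≤ M * q
          · rw [if_pos ⟨hq, hp⟩, if_pos (by simp; omega)]
          · rw [if_neg (by tauto), if_neg (by simp; omega)]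
        calc (∑' p : ℕ, if max Q 1 ≤ q ∧ p ≤ M * q then C q else 0)
            = ∑' p : ℕ, if p ∈ Finset.range (M*q+1) then C q else 0 := tsum_congr hcg
        _ = ∑ p ∈ Finset.range (M*q+1), C q := by
            rw [tsum_eq_sum (s := Finset.range (M*q+1)) (fun p hp => if_neg hp)]
            exact Finset.sum_congr rfl (fun p hp => if_pos hp)
        _ = (M*q+1 : ℕ) * C q := by
            rw [Finset.sum_const, Finset.card_range, nsmul_eq_mul]
        _ = FE q := by
            simp only [hFEdef, hFdef, hCdef]
            rw [ENNReal.ofReal_mul (Nat.cast_nonneg _), ENNReal.ofReal_natCast]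
      · rw [if_neg hq]
        have : ∀ p : ℕ, (if max Q 1 ≤ q ∧ p ≤ M * q then C q else 0) = 0 := by
          intro p; rw [if_neg (by tauto)]
        rw [tsum_congr this, tsum_zero]
    rw [tsum_congr hinner]
    have hreindex : (∑' k : ℕ, (fun q : ℕ => if max Q 1 ≤ q then FE q else 0) (k + max Q 1))
        = ∑' q : ℕ, (if max Q 1 ≤ q then FE q else 0) := by
      refine Function.Injective.tsum_eq (g := fun k : ℕ => k + max Q 1)
        (f := fun q : ℕ => if max Q 1 ≤ q then FE q else 0)
        (add_left_injective (max Q 1)) ?_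
      intro q hqsup
      rcases le_or_gt (max Q 1) q with h | h
      · exact ⟨q - max Q 1, by simp only []; omega⟩
      · rw [Function.mem_support, if_neg (not_le.mpr h)] at hqsup
        exact absurd rfl hqsup
    rw [← hreindex]
    refine ENNReal.tsum_le_tsum fun k => ?_
    beta_reduce
    rw [if_pos (by omega : max Q 1 ≤ k + max Q 1)]
  -- put it together
  have hmain := MeasureTheory.Measure.hausdorffMeasure_le_liminf_tsum s (Jarnik β c) r hrtend (jcover β c M)
    (Eventually.of_forall hdiam)
    (Eventually.of_forall (fun Q => jarnik_subset_cover hβ0.le hc hM Q))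
  have htail : Tendsto (fun Q : ℕ => ∑' k : ℕ, FE (k + max Q 1)) atTop (𝓝 0) :=
    (ENNReal.tendsto_sum_nat_add FE htop).comp hmaxtend
  have hlim : liminf (fun Q : ℕ => ∑' i : ℕ×ℕ, EMetric.diam (jcover β c M Q i) ^ s) atTop
      ≤ 0 := by
    calc liminf (fun Q : ℕ => ∑' i : ℕ×ℕ, EMetric.diam (jcover β c M Q i) ^ s) atTop
        ≤ liminf (fun Q : ℕ => ∑' k : ℕ, FE (k + max Q 1)) atTop :=
          liminf_le_liminf (Eventually.of_forall hQle)
    _ = 0 := htail.liminf_eq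
  exact le_antisymm (hmain.trans hlim) zero_le

lemma jarnik_dimH_le {β c : ℝ} (hβ : 2 < β) (hc : 0 ≤ c) :
    dimH (Jarnik β c) ≤ ENNReal.ofReal (2/β) := by
  by_contra hlt
  push_neg at hlt
  obtain ⟨t, ht1, ht2⟩ := ENNReal.lt_iff_exists_nnreal_btwn.mp hlt
  have hβ0 : (0:ℝ) < β := by linarith
  have ht0 : 0 < t := ENNReal.coe_pos.mp (lt_of_le_of_lt zero_le ht1)
  have htR : (0:ℝ) < (t:ℝ) := ht0
  have hs' : 2/β < (t:ℝ) := by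
    rw [← ENNReal.ofReal_coe_nnreal] at ht1
    exact (ENNReal.ofReal_lt_ofReal_iff htR).mp ht1
  have h0 : μH[(t:ℝ)] (Jarnik β c) = 0 := jarnik_hm hβ hc hs'
  exact absurd (dimH_le_of_hausdorffMeasure_ne_top (by rw [h0]; exact ENNReal.zero_ne_top))
    (not_le.mpr ht2)


lemma part1 {θ : ℝ} {α : ℝ} (hα : 1 < α) (hIcc : θ ∈ Set.Icc (0:ℝ) 1)
    (hcf : IsCF θ a) (hA : 0 < Acf a α) :
    ∃ m : ℕ, θ ∈ Jarnik (α + 1) (m : ℝ) := by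
  obtain ⟨-, ha, hθ⟩ := hcf
  obtain ⟨m, hm⟩ := ENNReal.exists_inv_nat_lt hA.ne'
  have hm0 : 0 < m := by
    rcases Nat.eq_zero_or_pos m with rfl | h
    · simp at hm
    · exact h
  have hmR : (0:ℝ) < m := by exact_mod_cast hm0
  -- frequently
  have hfreq : ∃ᶠ n in atTop,
      (m : ℝ≥0∞)⁻¹ < (a (n+1) : ENNReal) * (cfQ a n : ENNReal) ^ (1 - α) :=
    Filter.frequently_lt_of_lt_limsup (by isBoundedDefault) hm
  -- the key pointwise estimate
  have key : ∀ n, (m : ℝ≥0∞)⁻¹ < (a (n+1) : ENNReal) * (cfQ a n : ENNReal) ^ (1 - α) →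
      0 < cfQ a n ∧ |θ - (cfP a n : ℝ)/(cfQ a n)| ≤ ((2*m : ℕ) : ℝ) * (cfQ a n : ℝ) ^ (-(α+1)) := by
    intro n hn
    set Q : ℝ := (cfQ a n : ℝ) with hQdef
    have hQ1 : (1:ℝ) ≤ Q := by rw [hQdef]; exact_mod_cast cfQ_one_le ha n
    have hQ0 : (0:ℝ) < Q := lt_of_lt_of_le zero_lt_one hQ1
    set A : ℝ := (a (n+1) : ℝ) with hAdef
    have hA1 : (1:ℝ) ≤ A := by rw [hAdef]; exact_mod_cast ha (n+1) (by omega)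
    have hA0 : (0:ℝ) < A := lt_of_lt_of_le zero_lt_one hA1
    -- convert ENNReal inequality to real
    have hreal : (m:ℝ)⁻¹ < A * Q ^ (1-α) := by
      have h1 : ((a (n+1) : ENNReal) * (cfQ a n : ENNReal) ^ (1 - α))
          = ENNReal.ofReal (A * Q ^ (1-α)) := by
        rw [ENNReal.ofReal_mul hA0.le, ← ENNReal.ofReal_rpow_of_pos hQ0]
        rw [hAdef, hQdef, ENNReal.ofReal_natCast, ENNReal.ofReal_natCast]
      have h2 : (m : ℝ≥0∞)⁻¹ = ENNReal.ofReal ((m:ℝ)⁻¹) := by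
        rw [ENNReal.ofReal_inv_of_pos hmR]
        simp
      rw [h1, h2] at hn
      have := (ENNReal.ofReal_lt_ofReal_iff_of_nonneg (by positivity)).mp hn
      exact this
    have hP0 : (0:ℝ) < Q ^ (α-1) := Real.rpow_pos_of_pos hQ0 _
    have hPinv : Q ^ (1-α) = (Q ^ (α-1))⁻¹ := by
      rw [← Real.rpow_neg hQ0.le]; ring_nf
    have hkey : Q ^ (α-1) < m * A := by
      rw [hPinv] at hreal
      have h3 := mul_lt_mul_of_pos_right hreal (mul_pos hmR hP0)
      have hl : (m:ℝ)⁻¹ * ((m:ℝ) * Q^(α-1)) = Q^(α-1) := by field_simp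
      have hr : A * (Q^(α-1))⁻¹ * ((m:ℝ) * Q^(α-1)) = (m:ℝ) * A := by
        field_simp
      rw [hl, hr] at h3
      exact h3
    -- chain of inequalities
    have hQ' : A * Q ≤ (cfQ a (n+1) : ℝ) := by
      rw [hAdef, hQdef]; exact_mod_cast cfQ_succ_ge ha n
    have hQ'0 : (0:ℝ) < (cfQ a (n+1) : ℝ) := cfQ_pos_real ha (n+1)
    have e1 : |θ - (cfP a n : ℝ)/Q| ≤ 2 / (Q * (cfQ a (n+1) : ℝ)) := theta_est ha hθ n
    have e2 : 2 / (Q * (cfQ a (n+1) : ℝ)) ≤ 2 / (A * Q^2) := by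
      apply div_le_div_of_nonneg_left (by norm_num) (by positivity)
      calc A * Q^2 = (A * Q) * Q := by ring
      _ ≤ (cfQ a (n+1) : ℝ) * Q := mul_le_mul_of_nonneg_right hQ' hQ0.le
      _ = Q * (cfQ a (n+1) : ℝ) := by ring
    have hpow : Q ^ (α+1) = Q ^ (α-1) * Q^2 := by
      rw [show α + 1 = (α-1) + 2 by ring, Real.rpow_add hQ0]
      norm_num [Real.rpow_two]
    have e3 : 2 / (A * Q^2) ≤ ((2*m:ℕ):ℝ) * Q ^ (-(α+1)) := by
      rw [Real.rpow_neg hQ0.le]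
      push_cast
      rw [mul_comm ((2:ℝ)*m) _, ← div_eq_inv_mul]
      rw [div_le_div_iff₀ (by positivity) (by positivity)]
      rw [hpow]
      nlinarith [hkey, sq_nonneg Q, hQ0, hP0]
    refine ⟨lt_of_lt_of_le Nat.zero_lt_one (cfQ_one_le ha n), e1.trans (e2.trans e3)⟩
  -- infinitude
  refine ⟨2*m, hIcc, ?_⟩
  have hinf : {n : ℕ | (m : ℝ≥0∞)⁻¹ < (a (n+1) : ENNReal) * (cfQ a n : ENNReal) ^ (1 - α)}.Infinite :=
    Nat.frequently_atTop_iff_infinite.mp hfreq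
  have hinf2 : ({n : ℕ | (m : ℝ≥0∞)⁻¹ < (a (n+1) : ENNReal) * (cfQ a n : ENNReal) ^ (1 - α)} \ {0}).Infinite :=
    hinf.diff (Set.finite_singleton 0)
  have hmono : StrictMono (fun k => cfQ a (k+1)) := strictMono_nat_of_lt_succ (fun k => cfQ_lt ha k)
  have hinj : Set.InjOn (fun n => (cfP a n, cfQ a n))
      ({n : ℕ | (m : ℝ≥0∞)⁻¹ < (a (n+1) : ENNReal) * (cfQ a n : ENNReal) ^ (1 - α)} \ {0}) := by
    intro x hx y hy hxy
    have hq : cfQ a x = cfQ a y := congrArg Prod.snd hxy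
    have hx0 : x ≠ 0 := hx.2
    have hy0 : y ≠ 0 := hy.2
    obtain ⟨x', rfl⟩ := Nat.exists_eq_succ_of_ne_zero hx0
    obtain ⟨y', rfl⟩ := Nat.exists_eq_succ_of_ne_zero hy0
    have := hmono.injective hq
    omega
  refine Set.Infinite.mono ?_ (hinf2.image hinj)
  rintro ⟨p, q⟩ ⟨n, hn, hEq⟩
  obtain ⟨h1, h2⟩ := key n hn.1
  rw [← hEq]
  exact ⟨h1, by simpa using h2⟩


end Aux

/-- `Θ̲_α` is contained in the countable union of Jarník sets
`J_{α+1}^m`, and consequently `dim_H(Θ̲_α) ≤ 2/(α+1)`. -/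
theorem stmt15 (α : ℝ) (hα : 1 < α) :
    ({θ : ℝ | θ ∈ Set.Icc (0:ℝ) 1 ∧ ∃ a, IsCF θ a ∧ 0 < Acf a α} ⊆
      ⋃ m : ℕ, Jarnik (α + 1) (m : ℝ)) ∧
    dimH {θ : ℝ | θ ∈ Set.Icc (0:ℝ) 1 ∧ ∃ a, IsCF θ a ∧ 0 < Acf a α} ≤
      ENNReal.ofReal (2 / (α + 1)) := by
  have hsub : {θ : ℝ | θ ∈ Set.Icc (0:ℝ) 1 ∧ ∃ a, IsCF θ a ∧ 0 < Acf a α} ⊆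
      ⋃ m : ℕ, Jarnik (α + 1) (m : ℝ) := by
    rintro θ ⟨hIcc, a, hcf, hA⟩
    obtain ⟨m, hm⟩ := part1 hα hIcc hcf hA
    exact Set.mem_iUnion.mpr ⟨m, hm⟩
  refine ⟨hsub, ?_⟩
  refine le_trans (dimH_mono hsub) ?_
  rw [dimH_iUnion]
  exact iSup_le fun m => jarnik_dimH_le (by linarith) (Nat.cast_nonneg m)

end CFPaper
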